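/- Let G be a finite connected simple graph with at least two vertices, and let u, v be distinct non-adjacent vertices of G. Let G + uv denote the graph obtained from G by adding the edge uv. Then γ_cer(G + uv) ≤ γ_cer(G). -/

import Mathlib

set_option linter.unusedSectionVars false
set_option maxHeartbeats 1000000


open Finset

variable {V : Type*} [Fintype V] [DecidableEq V]

/-- `D` is a dominating set of `G`: every vertex outside `D` has a neighbour in `D`. -/
def IsDomSet (G : SimpleGraph V) (D : Finset V) : Prop :=
  ∀ v ∉ D, ∃ u ∈ D, G.Adj u v

/-- `D` is a certified dominating set of `G`: it is dominating and every vertex of `D`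
has either zero or at least two neighbours outside `D`. -/
def IsCertDomSet (G : SimpleGraph V) [DecidableRel G.Adj] (D : Finset V) : Prop :=
  IsDomSet G D ∧ ∀ v ∈ D, (G.neighborFinset v \ D).card = 0 ∨ 2 ≤ (G.neighborFinset v \ D).card

/-- The domination number: minimum cardinality of a dominating set. -/
noncomputable def gamma (G : SimpleGraph V) : ℕ :=
  sInf {n | ∃ D : Finset V, IsDomSet G D ∧ D.card = n}

/-- The certified domination number: minimum cardinality of a certified dominating set. -/
noncomputable def gammaCer (G : SimpleGraph V) [DecidableRel G.Adj] : ℕ :=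
  sInf {n | ∃ D : Finset V, IsCertDomSet G D ∧ D.card = n}

/-- A leaf is a vertex of degree one. -/
abbrev IsLeaf (G : SimpleGraph V) [DecidableRel G.Adj] (v : V) : Prop := G.degree v = 1

/-- The set of leaf-neighbours of a vertex. -/
abbrev leafNbrs (G : SimpleGraph V) [DecidableRel G.Adj] (v : V) : Finset V :=
  (G.neighborFinset v).filter (fun l => G.degree l = 1)

/-- A weak support is a vertex adjacent to exactly one leaf. -/
abbrev IsWeakSupport (G : SimpleGraph V) [DecidableRel G.Adj] (v : V) : Prop :=
  (leafNbrs G v).card = 1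

/-- A strong support is a vertex adjacent to at least two leaves. -/
abbrev IsStrongSupport (G : SimpleGraph V) [DecidableRel G.Adj] (v : V) : Prop :=
  2 ≤ (leafNbrs G v).card

section Helpers

variable (G : SimpleGraph V) [DecidableRel G.Adj]

lemma closed_eq_univ (hconn : G.Connected) (B : Finset V) (hB : B.Nonempty)
    (hcl : ∀ x ∈ B, G.neighborFinset x ⊆ B) : B = Finset.univ := by
  obtain ⟨b, hb⟩ := hB
  have key : ∀ {a c : V}, G.Walk a c → a ∈ B → c ∈ B := by
    intro a c w
    induction w with
    | nil => exact id
    | cons h p ih =>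
        intro ha
        exact ih (hcl _ ha (by rwa [SimpleGraph.mem_neighborFinset]))
  ext y
  simp only [Finset.mem_univ, iff_true]
  obtain ⟨w⟩ := hconn.preconnected b y
  exact key w hb

lemma nbr_nonempty (hconn : G.Connected) (hcard : 2 ≤ Fintype.card V) (x : V) :
    (G.neighborFinset x).Nonempty := by
  obtain ⟨y, hy⟩ := Fintype.exists_ne_of_one_lt_card (by omega) x
  obtain ⟨w⟩ := hconn.preconnected x y
  cases w with
  | nil => exact absurd rfl hy
  | cons h p => exact ⟨_, by simp only [SimpleGraph.mem_neighborFinset]; exact h⟩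

end Helpers

section Key

variable (G : SimpleGraph V) [DecidableRel G.Adj]

lemma adj_mem_nbr {G : SimpleGraph V} [DecidableRel G.Adj] {x y : V}
    (h : x ∈ G.neighborFinset y) : y ∈ G.neighborFinset x := by
  simp only [SimpleGraph.mem_neighborFinset] at h ⊢
  exact h.symm

lemma keyT (A : Finset V) (u : V) (hu : u ∈ A)
    (hnbr : ∀ x ∈ A, (G.neighborFinset x).Nonempty)
    (hstar : ∀ B ⊆ A, B.Nonempty → ∃ t ∈ B, ¬ G.neighborFinset t ⊆ B) :
    ∃ T ⊆ A, T.Nonempty ∧ (∀ t ∈ T, ¬ G.neighborFinset t ⊆ T) ∧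
      (∀ d ∈ A, d ∉ T → d ≠ u → (G.neighborFinset d ∩ T).card ≠ 1) := by
  classical
  set Esc := A.filter (fun x => ¬ G.neighborFinset x ⊆ A) with hEscdef
  have main : ∀ (k : ℕ) (F : Finset V), Esc ⊆ F → F ⊆ A → (A \ F).card ≤ k →
      ∃ T ⊆ A, T.Nonempty ∧
        (∀ t ∈ T, t ∈ F ∨ ((G.neighborFinset t) ∩ (A \ T)).Nonempty) ∧
        (∀ d ∈ A, d ∉ T → d ≠ u → (G.neighborFinset d ∩ T).card ≠ 1) := by
    intro k
    induction k with
    | zero =>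
        intro F hEF hFA hc
        have hAF : A ⊆ F := by
          intro x hx
          by_contra hxF
          have : x ∈ A \ F := mem_sdiff.2 ⟨hx, hxF⟩
          have := card_pos.2 ⟨x, this⟩
          omega
        refine ⟨A, Subset.rfl, ⟨u, hu⟩, fun t ht => Or.inl (hAF ht), ?_⟩
        intro d hd hd'
        exact absurd hd hd'.elim
    | succ k ih =>
        intro F hEF hFA hc
        by_cases h0 : A \ F = ∅
        · have hAF : A ⊆ F := by
            intro x hx
            by_contra hxF
            exact (eq_empty_iff_forall_notMem.1 h0 x) (mem_sdiff.2 ⟨hx, hxF⟩)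
          refine ⟨A, Subset.rfl, ⟨u, hu⟩, fun t ht => Or.inl (hAF ht), ?_⟩
          intro d hd hd'
          exact absurd hd hd'.elim
        -- nonempty leaf pool
        · -- basic fact: every x ∈ A \ F has all nbrs inside A
          have hNA : ∀ x ∈ A \ F, G.neighborFinset x ⊆ A := by
            intro x hx
            by_contra h
            exact (mem_sdiff.1 hx).2 (hEF (mem_filter.2 ⟨(mem_sdiff.1 hx).1, h⟩))
          -- promotion helper : given x ∈ A \ F, get solution for F from solution for insert x F,
          -- provided either certificates survive or we can erase x.
          -- we inline it for the two cases (x = u and deg ≠ 1).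
          by_cases huF : u ∈ F
          · by_cases hx : ∃ x ∈ A \ F, (G.neighborFinset x ∩ A).card ≠ 1
            · obtain ⟨x, hxL, hxcard⟩ := hx
              obtain ⟨hxA, hxF⟩ := mem_sdiff.1 hxL
              have hNxA : G.neighborFinset x ⊆ A := hNA x hxL
              have hNx2 : 2 ≤ (G.neighborFinset x).card := by
                have h1 : (G.neighborFinset x ∩ A) = G.neighborFinset x := inter_eq_left.2 hNxA
                rw [h1] at hxcard
                have := card_pos.2 (hnbr x hxA)
                omega
              have hcd : (A \ insert x F).card ≤ k := by
                rw [Finset.sdiff_insert]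
                rw [card_erase_of_mem hxL]
                omega
              obtain ⟨T, hTA, hTne, ha, hb⟩ :=
                ih (insert x F) (hEF.trans (subset_insert _ _)) (insert_subset hxA hFA) hcd
              by_cases hcert : x ∈ T ∧ (G.neighborFinset x ∩ (A \ T)) = ∅
              · obtain ⟨hxT, hempty⟩ := hcert
                have hNxT : G.neighborFinset x ⊆ T := by
                  intro y hy
                  by_contra hyT
                  exact (eq_empty_iff_forall_notMem.1 hempty y)
                    (mem_inter.2 ⟨hy, mem_sdiff.2 ⟨hNxA hy, hyT⟩⟩)
                refine ⟨T.erase x, (erase_subset _ _).trans hTA, ?_, ?_, ?_⟩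
                · obtain ⟨y, hy⟩ := hnbr x hxA
                  refine ⟨y, mem_erase.2 ⟨?_, hNxT hy⟩⟩
                  intro h; subst h
                  simp only [SimpleGraph.mem_neighborFinset] at hy
                  exact G.irrefl hy
                · intro t ht
                  have ht' := mem_of_mem_erase ht
                  have htx : t ≠ x := (mem_erase.1 ht).1
                  rcases ha t ht' with hF' | ⟨y, hy⟩
                  · rcases mem_insert.1 hF' with h | h
                    · exact absurd h htx
                    · exact Or.inl h
                  · refine Or.inr ⟨y, mem_inter.2 ⟨(mem_inter.1 hy).1, ?_⟩⟩
                    have h2 := mem_sdiff.1 (mem_inter.1 hy).2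
                    exact mem_sdiff.2 ⟨h2.1, fun hc => h2.2 (mem_of_mem_erase hc)⟩
                · intro d hdA hdT hdu
                  by_cases hdx : d = x
                  · subst hdx
                    have h1 : G.neighborFinset d ∩ T.erase d = G.neighborFinset d := by
                      apply inter_eq_left.2
                      intro y hy
                      refine mem_erase.2 ⟨?_, hNxT hy⟩
                      intro h; subst h
                      simp only [SimpleGraph.mem_neighborFinset] at hy
                      exact G.irrefl hy
                    rw [h1]
                    omega
                  · have hdT' : d ∉ T := fun h => hdT (mem_erase.2 ⟨hdx, h⟩)
                    have hxd : x ∉ G.neighborFinset d := by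
                      intro h
                      exact hdT' (hNxT (adj_mem_nbr h))
                    have h2 : G.neighborFinset d ∩ T.erase x = G.neighborFinset d ∩ T := by
                      ext y
                      simp only [mem_inter, mem_erase]
                      constructor
                      · rintro ⟨h1, _, h3⟩; exact ⟨h1, h3⟩
                      · rintro ⟨h1, h3⟩
                        refine ⟨h1, ?_, h3⟩
                        rintro rfl; exact hxd h1
                    rw [h2]
                    exact hb d hdA hdT' hdu
              · refine ⟨T, hTA, hTne, ?_, hb⟩
                intro t ht
                rcases ha t ht with hF' | h
                · rcases mem_insert.1 hF' with h | h
                  · subst h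
                    right
                    exact nonempty_iff_ne_empty.2 ((not_and.1 hcert) ht)
                  · exact Or.inl h
                · exact Or.inr h
            · -- all leaves
              push_neg at hx
              have hleaf : ∀ ℓ ∈ A \ F, ∃ s, G.neighborFinset ℓ = {s} := by
                intro ℓ hℓ
                have h1 : G.neighborFinset ℓ ∩ A = G.neighborFinset ℓ := inter_eq_left.2 (hNA ℓ hℓ)
                have h2 := hx ℓ hℓ
                rw [h1] at h2
                exact card_eq_one.1 h2
              have hsF : ∀ ℓ ∈ A \ F, ∀ s, G.neighborFinset ℓ = {s} → s ∈ F := by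
                intro ℓ hℓ s hs
                by_contra hsF'
                have hsNf : s ∈ G.neighborFinset ℓ := by rw [hs]; exact mem_singleton_self s
                have hsA : s ∈ A := hNA ℓ hℓ hsNf
                have hsL : s ∈ A \ F := mem_sdiff.2 ⟨hsA, hsF'⟩
                obtain ⟨z, hz⟩ := hleaf s hsL
                have hℓz : ℓ ∈ G.neighborFinset s := adj_mem_nbr hsNf
                have hzℓ : z = ℓ := by rw [hz] at hℓz; exact (mem_singleton.1 hℓz).symm
                rw [hzℓ] at hz
                obtain ⟨t, htB, htn⟩ := hstar ({ℓ, s} : Finset V) (by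
                    intro w hw
                    rcases mem_insert.1 hw with rfl | hw'
                    · exact (mem_sdiff.1 hℓ).1
                    · rw [mem_singleton.1 hw']; exact hsA) ⟨ℓ, mem_insert_self _ _⟩
                rcases mem_insert.1 htB with rfl | ht'
                · apply htn
                  rw [hs]
                  intro w hw
                  rw [mem_singleton.1 hw]
                  exact mem_insert_of_mem (mem_singleton_self s)
                · rw [mem_singleton.1 ht'] at htn
                  apply htn
                  rw [hz]
                  intro w hw
                  rw [mem_singleton.1 hw]
                  exact mem_insert_self _ _
              by_cases h3a : ∃ ℓ₁ ∈ A \ F, ∃ ℓ₂ ∈ A \ F, ℓ₁ ≠ ℓ₂ ∧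
                  G.neighborFinset ℓ₁ = G.neighborFinset ℓ₂
              · obtain ⟨ℓ₁, hℓ₁, ℓ₂, hℓ₂, hne, hNeq⟩ := h3a
                obtain ⟨s, hs⟩ := hleaf ℓ₁ hℓ₁
                have hsA : s ∈ A := hNA ℓ₁ hℓ₁ (by rw [hs]; exact mem_singleton_self s)
                have hsF' : s ∈ F := hsF ℓ₁ hℓ₁ s hs
                set T := (A \ F).filter (fun ℓ => G.neighborFinset ℓ = {s}) with hTdef
                have hsT : s ∉ T := fun h => (mem_sdiff.1 (mem_filter.1 h).1).2 hsF'
                have hmemT : ∀ {y}, y ∈ T → G.neighborFinset y = {s} :=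
                  fun h => (mem_filter.1 h).2
                refine ⟨T, (filter_subset _ _).trans sdiff_subset,
                  ⟨ℓ₁, mem_filter.2 ⟨hℓ₁, hs⟩⟩, ?_, ?_⟩
                · intro t ht
                  right
                  refine ⟨s, mem_inter.2 ⟨?_, mem_sdiff.2 ⟨hsA, hsT⟩⟩⟩
                  rw [hmemT ht]; exact mem_singleton_self s
                · intro d hdA hdT hdu
                  by_cases hds : d = s
                  · subst hds
                    have hsub2 : {ℓ₁, ℓ₂} ⊆ G.neighborFinset d ∩ T := by
                      intro w hw
                      have hwT : w ∈ T := by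
                        rcases mem_insert.1 hw with rfl | hw'
                        · exact mem_filter.2 ⟨hℓ₁, hs⟩
                        · rw [mem_singleton.1 hw']
                          exact mem_filter.2 ⟨hℓ₂, by rw [← hNeq]; exact hs⟩
                      refine mem_inter.2 ⟨?_, hwT⟩
                      exact adj_mem_nbr (by rw [hmemT hwT]; exact mem_singleton_self d)
                    have h2 : ({ℓ₁, ℓ₂} : Finset V).card = 2 := card_pair hne
                    have h3 := card_le_card hsub2
                    omega
                  · have hTempty : G.neighborFinset d ∩ T = ∅ := by
                      rw [eq_empty_iff_forall_notMem]
                      intro y hy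
                      obtain ⟨hy1, hy2⟩ := mem_inter.1 hy
                      have hdy : d ∈ G.neighborFinset y := adj_mem_nbr hy1
                      rw [hmemT hy2] at hdy
                      exact hds (mem_singleton.1 hdy)
                    rw [hTempty]
                    simp
              · push_neg at h3a
                by_cases h3bi : ∃ ℓ ∈ A \ F, G.neighborFinset ℓ = {u}
                · obtain ⟨ℓu, hℓuL, hℓu⟩ := h3bi
                  refine ⟨{ℓu}, singleton_subset_iff.2 (mem_sdiff.1 hℓuL).1,
                    singleton_nonempty _, ?_, ?_⟩
                  · intro t ht
                    rw [mem_singleton.1 ht]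
                    right
                    refine ⟨u, mem_inter.2 ⟨by rw [hℓu]; exact mem_singleton_self u,
                      mem_sdiff.2 ⟨hu, ?_⟩⟩⟩
                    rw [mem_singleton]
                    intro h
                    exact (mem_sdiff.1 hℓuL).2 (h ▸ huF)
                  · intro d hdA hdT hdu
                    have hnd : ℓu ∉ G.neighborFinset d := by
                      intro h
                      have h2 := adj_mem_nbr h
                      rw [hℓu] at h2
                      exact hdu (mem_singleton.1 h2)
                    rw [inter_singleton_of_notMem hnd]
                    simp
                · push_neg at h3bi
                  set W := F.filter (fun w => ∀ ℓ ∈ A \ F, G.neighborFinset ℓ ≠ {w}) with hWdef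
                  set Bs := (A \ F).filter
                      (fun ℓ => ∀ s ∈ G.neighborFinset ℓ, (G.neighborFinset s ∩ W).card = 1)
                    with hBdef
                  have hWF : W ⊆ F := filter_subset _ _
                  have hBL : Bs ⊆ A \ F := filter_subset _ _
                  have huW : u ∈ W := mem_filter.2 ⟨huF, h3bi⟩
                  set T := W ∪ Bs with hTdef
                  have hTA' : T ⊆ A := union_subset (hWF.trans hFA) (hBL.trans sdiff_subset)
                  have hsupT : ∀ ℓ ∈ A \ F, ∀ s, G.neighborFinset ℓ = {s} → s ∉ T := by
                    intro ℓ hℓ s hs hsT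
                    rcases mem_union.1 hsT with h | h
                    · exact (mem_filter.1 h).2 ℓ hℓ hs
                    · exact (mem_sdiff.1 (hBL h)).2 (hsF ℓ hℓ s hs)
                  refine ⟨T, hTA', ⟨u, mem_union_left _ huW⟩, ?_, ?_⟩
                  · intro t ht
                    rcases mem_union.1 ht with htW | htB
                    · exact Or.inl (hWF htW)
                    · right
                      have htL := hBL htB
                      obtain ⟨s, hs⟩ := hleaf t htL
                      refine ⟨s, mem_inter.2 ⟨by rw [hs]; exact mem_singleton_self s,
                        mem_sdiff.2 ⟨hNA t htL (by rw [hs]; exact mem_singleton_self s),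
                          hsupT t htL s hs⟩⟩⟩
                  · intro d hdA hdT hdu
                    by_cases hdF : d ∈ F
                    · have hdW : d ∉ W := fun h => hdT (mem_union_left _ h)
                      obtain ⟨ℓd, hℓdL, hℓd⟩ : ∃ ℓ ∈ A \ F, G.neighborFinset ℓ = {d} := by
                        by_contra hcon
                        push_neg at hcon
                        exact hdW (mem_filter.2 ⟨hdF, hcon⟩)
                      have hℓdNf : ℓd ∈ G.neighborFinset d :=
                        adj_mem_nbr (by rw [hℓd]; exact mem_singleton_self d)
                      have hsplit : G.neighborFinset d ∩ T
                          = (G.neighborFinset d ∩ W) ∪ (G.neighborFinset d ∩ Bs) := by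
                        rw [hTdef, inter_union_distrib_left]
                      have hdisj : Disjoint (G.neighborFinset d ∩ W) (G.neighborFinset d ∩ Bs) := by
                        apply disjoint_left.2
                        intro a haW haB
                        have h1 := (mem_inter.1 haW).2
                        have h2 := (mem_inter.1 haB).2
                        exact (mem_sdiff.1 (hBL h2)).2 (hWF h1)
                      have hBchar : ∀ y, y ∈ G.neighborFinset d ∩ Bs → y = ℓd := by
                        intro y hy
                        obtain ⟨hy1, hy2⟩ := mem_inter.1 hy
                        have hyL := hBL hy2
                        obtain ⟨sy, hsy⟩ := hleaf y hyL
                        have hdy : d ∈ G.neighborFinset y := adj_mem_nbr hy1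
                        rw [hsy] at hdy
                        have hsyd : sy = d := (mem_singleton.1 hdy).symm
                        subst hsyd
                        by_contra hneq
                        exact h3a y hyL ℓd hℓdL hneq (by rw [hsy, hℓd])
                      by_cases hm : (G.neighborFinset d ∩ W).card = 1
                      · have hℓdB : ℓd ∈ Bs := by
                          refine mem_filter.2 ⟨hℓdL, ?_⟩
                          intro s hsN
                          rw [hℓd] at hsN
                          rw [mem_singleton.1 hsN]
                          exact hm
                        have hBeq : G.neighborFinset d ∩ Bs = {ℓd} := by
                          apply Subset.antisymm
                          · intro y hy; rw [mem_singleton]; exact hBchar y hy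
                          · intro y hy; rw [mem_singleton.1 hy]
                            exact mem_inter.2 ⟨hℓdNf, hℓdB⟩
                        rw [hsplit, card_union_of_disjoint hdisj, hBeq, hm]
                        simp
                      · have hBeq : G.neighborFinset d ∩ Bs = ∅ := by
                          rw [eq_empty_iff_forall_notMem]
                          intro y hy
                          have hyd := hBchar y hy
                          subst hyd
                          have hyB := (mem_inter.1 hy).2
                          have h5 := (mem_filter.1 hyB).2 d
                            (by rw [hℓd]; exact mem_singleton_self d)
                          exact hm h5
                        rw [hsplit, card_union_of_disjoint hdisj, hBeq]
                        simpa using hm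
                    · have hdL : d ∈ A \ F := mem_sdiff.2 ⟨hdA, hdF⟩
                      obtain ⟨s, hs⟩ := hleaf d hdL
                      have hsT : s ∉ T := hsupT d hdL s hs
                      have hempty : G.neighborFinset d ∩ T = ∅ := by
                        rw [hs, singleton_inter_of_notMem hsT]
                      rw [hempty]
                      simp
          · -- u ∉ F : promote u
            have huL : u ∈ A \ F := mem_sdiff.2 ⟨hu, huF⟩
            have hNuA : G.neighborFinset u ⊆ A := hNA u huL
            have hcd : (A \ insert u F).card ≤ k := by
              rw [Finset.sdiff_insert, card_erase_of_mem huL]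
              omega
            obtain ⟨T, hTA, hTne, ha, hb⟩ :=
              ih (insert u F) (hEF.trans (subset_insert _ _)) (insert_subset hu hFA) hcd
            by_cases hcert : u ∈ T ∧ (G.neighborFinset u ∩ (A \ T)) = ∅
            · obtain ⟨huT, hempty⟩ := hcert
              have hNuT : G.neighborFinset u ⊆ T := by
                intro y hy
                by_contra hyT
                exact (eq_empty_iff_forall_notMem.1 hempty y)
                  (mem_inter.2 ⟨hy, mem_sdiff.2 ⟨hNuA hy, hyT⟩⟩)
              refine ⟨T.erase u, (erase_subset _ _).trans hTA, ?_, ?_, ?_⟩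
              · obtain ⟨y, hy⟩ := hnbr u hu
                refine ⟨y, mem_erase.2 ⟨?_, hNuT hy⟩⟩
                intro h; subst h
                simp only [SimpleGraph.mem_neighborFinset] at hy
                exact G.irrefl hy
              · intro t ht
                have ht' := mem_of_mem_erase ht
                have htx : t ≠ u := (mem_erase.1 ht).1
                rcases ha t ht' with hF' | ⟨y, hy⟩
                · rcases mem_insert.1 hF' with h | h
                  · exact absurd h htx
                  · exact Or.inl h
                · refine Or.inr ⟨y, mem_inter.2 ⟨(mem_inter.1 hy).1, ?_⟩⟩
                  have h2 := mem_sdiff.1 (mem_inter.1 hy).2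
                  exact mem_sdiff.2 ⟨h2.1, fun hc => h2.2 (mem_of_mem_erase hc)⟩
              · intro d hdA hdT hdu
                have hdT' : d ∉ T := fun h => hdT (mem_erase.2 ⟨hdu, h⟩)
                have hud : u ∉ G.neighborFinset d := by
                  intro h
                  exact hdT' (hNuT (adj_mem_nbr h))
                have h2 : G.neighborFinset d ∩ T.erase u = G.neighborFinset d ∩ T := by
                  ext y
                  simp only [mem_inter, mem_erase]
                  constructor
                  · rintro ⟨h1, _, h3⟩; exact ⟨h1, h3⟩
                  · rintro ⟨h1, h3⟩
                    refine ⟨h1, ?_, h3⟩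
                    rintro rfl; exact hud h1
                rw [h2]
                exact hb d hdA hdT' hdu
            · refine ⟨T, hTA, hTne, ?_, hb⟩
              intro t ht
              rcases ha t ht with hF' | h
              · rcases mem_insert.1 hF' with h | h
                · subst h
                  right
                  exact nonempty_iff_ne_empty.2 ((not_and.1 hcert) ht)
                · exact Or.inl h
              · exact Or.inr h
  obtain ⟨T, hTA, hTne, ha, hb⟩ := main (A \ Esc).card Esc Subset.rfl (filter_subset _ _) le_rfl
  refine ⟨T, hTA, hTne, ?_, hb⟩
  intro t ht hsub
  rcases ha t ht with hF | ⟨y, hy⟩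
  · obtain ⟨-, hesc⟩ := mem_filter.1 hF
    exact hesc (hsub.trans hTA)
  · obtain ⟨h1, h2⟩ := mem_inter.1 hy
    exact (mem_sdiff.1 h2).2 (hsub h1)

end Key

section Core

variable (G : SimpleGraph V) [DecidableRel G.Adj]

lemma nbr_sup_ne {u v : V} (x : V) (hxu : x ≠ u) (hxv : x ≠ v) :
    (G ⊔ SimpleGraph.edge u v).neighborFinset x = G.neighborFinset x := by
  ext y
  simp only [SimpleGraph.mem_neighborFinset, SimpleGraph.sup_adj, SimpleGraph.edge_adj]
  constructor
  · rintro (h | ⟨(⟨rfl, rfl⟩ | ⟨rfl, rfl⟩), hne⟩)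
    · exact h
    · exact absurd rfl hxu
    · exact absurd rfl hxv
  · exact fun h => Or.inl h

lemma nbr_sup_u {u v : V} (huv : u ≠ v) (hnadj : ¬ G.Adj u v) :
    (G ⊔ SimpleGraph.edge u v).neighborFinset u = insert v (G.neighborFinset u) := by
  ext y
  simp only [SimpleGraph.mem_neighborFinset, SimpleGraph.sup_adj, SimpleGraph.edge_adj,
    mem_insert]
  constructor
  · rintro (h | ⟨(⟨-, rfl⟩ | ⟨rfl, rfl⟩), hne⟩)
    · exact Or.inr h
    · exact Or.inl rfl
    · exact absurd rfl huv
  · rintro (rfl | h)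
    · exact Or.inr ⟨Or.inl ⟨trivial, rfl⟩, huv⟩
    · exact Or.inl h

lemma edge_comm' (u v : V) : SimpleGraph.edge u v = SimpleGraph.edge v u := by
  rw [SimpleGraph.edge, SimpleGraph.edge, Sym2.eq_swap]

lemma core (hconn : G.Connected) (hcard : 2 ≤ Fintype.card V) (u v : V)
    (huv : u ≠ v) (hnadj : ¬ G.Adj u v)
    (D : Finset V) (hD : IsCertDomSet G D) (huD : u ∈ D) (hvD : v ∉ D)
    (hu0 : G.neighborFinset u ⊆ D) :
    (∃ D', IsCertDomSet (G ⊔ SimpleGraph.edge u v) D' ∧ D'.card ≤ D.card) ∨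
    (∃ D', IsCertDomSet G D' ∧ D'.card < D.card) := by
  classical
  set A := D.filter (fun d => G.neighborFinset d ⊆ D) with hAdef
  have hAD : A ⊆ D := filter_subset _ _
  have hANf : ∀ x ∈ A, G.neighborFinset x ⊆ D := fun x hx => (mem_filter.1 hx).2
  have huA : u ∈ A := mem_filter.2 ⟨huD, hu0⟩
  have hstar : ∀ B ⊆ A, B.Nonempty → ∃ t ∈ B, ¬ G.neighborFinset t ⊆ B := by
    intro B hBA hBne
    by_contra hcon
    push_neg at hcon
    have hBu : B = Finset.univ := closed_eq_univ G hconn B hBne hcon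
    have hvB : v ∈ B := hBu ▸ mem_univ v
    exact hvD (hAD (hBA hvB))
  obtain ⟨T, hTA, hTne, ha, hb⟩ :=
    keyT G A u huA (fun x _ => nbr_nonempty G hconn hcard x) hstar
  have hTD : T ⊆ D := hTA.trans hAD
  -- domination for D \ T in G
  have hdom : ∀ x, x ∉ D \ T → ∃ d ∈ D \ T, G.Adj d x := by
    intro x hx
    by_cases hxD : x ∈ D
    · have hxT : x ∈ T := by
        by_contra h; exact hx (mem_sdiff.2 ⟨hxD, h⟩)
      obtain ⟨y, hyN, hyT⟩ := not_subset.1 (ha x hxT)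
      refine ⟨y, mem_sdiff.2 ⟨hANf x (hTA hxT) hyN, hyT⟩, ?_⟩
      simp only [SimpleGraph.mem_neighborFinset] at hyN
      exact hyN.symm
    · obtain ⟨d, hdD, hdadj⟩ := hD.1 x hxD
      have hdT : d ∉ T := fun hdT =>
        hxD (hANf d (hTA hdT) (by simp only [SimpleGraph.mem_neighborFinset]; exact hdadj))
      exact ⟨d, mem_sdiff.2 ⟨hdD, hdT⟩, hdadj⟩
  -- card split
  have hcards : ∀ d : V, (G.neighborFinset d \ (D \ T)).card
      = (G.neighborFinset d \ D).card + (G.neighborFinset d ∩ T).card := by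
    intro d
    have hsplitc : G.neighborFinset d \ (D \ T)
        = (G.neighborFinset d \ D) ∪ (G.neighborFinset d ∩ T) := by
      ext y
      simp only [mem_sdiff, mem_union, mem_inter, not_and, not_not]
      constructor
      · rintro ⟨hy, h2⟩
        by_cases hyD : y ∈ D
        · exact Or.inr ⟨hy, h2 hyD⟩
        · exact Or.inl ⟨hy, hyD⟩
      · rintro (⟨hy, hyD⟩ | ⟨hy, hyT⟩)
        · exact ⟨hy, fun hc => absurd hc hyD⟩
        · exact ⟨hy, fun _ => hyT⟩
    have hdisjc : Disjoint (G.neighborFinset d \ D) (G.neighborFinset d ∩ T) := by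
      apply disjoint_left.2
      intro a h1 h2
      exact (mem_sdiff.1 h1).2 (hTD (mem_inter.1 h2).2)
    rw [hsplitc, card_union_of_disjoint hdisjc]
  have hGcount : ∀ d ∈ D \ T, d ≠ u → ((G.neighborFinset d \ (D \ T)).card = 0 ∨
      2 ≤ (G.neighborFinset d \ (D \ T)).card) := by
    intro d hd hdu
    obtain ⟨hdD, hdT⟩ := mem_sdiff.1 hd
    by_cases hdA : d ∈ A
    · have h1 : G.neighborFinset d \ D = ∅ := sdiff_eq_empty_iff_subset.2 (hANf d hdA)
      have h2 := hb d hdA hdT hdu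
      rw [hcards d, h1, card_empty]
      omega
    · have h3 : ¬ G.neighborFinset d ⊆ D := fun h => hdA (mem_filter.2 ⟨hdD, h⟩)
      rcases hD.2 d hdD with h4 | h4
      · exact absurd (sdiff_eq_empty_iff_subset.1 (card_eq_zero.1 h4)) h3
      · right
        rw [hcards d]
        omega
  by_cases hcase : u ∈ T ∨ (G.neighborFinset u ∩ T).Nonempty
  · left
    refine ⟨D \ T, ⟨?_, ?_⟩, card_le_card sdiff_subset⟩
    · intro x hx
      obtain ⟨d, hd, hadj⟩ := hdom x hx
      exact ⟨d, hd, (SimpleGraph.sup_adj _ _ _ _).2 (Or.inl hadj)⟩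
    · intro d hd
      obtain ⟨hdD, hdT⟩ := mem_sdiff.1 hd
      have hdv : d ≠ v := fun h => hvD (h ▸ hdD)
      by_cases hdu : d = u
      · subst hdu
        have hNE : (G.neighborFinset d ∩ T).Nonempty := hcase.resolve_left hdT
        rw [nbr_sup_u G huv hnadj]
        right
        have hvmem : v ∈ insert v (G.neighborFinset d) \ (D \ T) :=
          mem_sdiff.2 ⟨mem_insert_self _ _, fun hc => hvD (mem_sdiff.1 hc).1⟩
        obtain ⟨y, hy⟩ := hNE
        obtain ⟨hy1, hy2⟩ := mem_inter.1 hy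
        have hymem : y ∈ insert v (G.neighborFinset d) \ (D \ T) :=
          mem_sdiff.2 ⟨mem_insert_of_mem hy1, fun hc => (mem_sdiff.1 hc).2 hy2⟩
        have hyv : v ≠ y := fun h => hvD (h ▸ hTD hy2)
        have hsub2 : ({v, y} : Finset V) ⊆ insert v (G.neighborFinset d) \ (D \ T) := by
          intro w hw
          rcases mem_insert.1 hw with rfl | hw'
          · exact hvmem
          · rw [mem_singleton.1 hw']; exact hymem
        have h2 := card_le_card hsub2
        rw [card_pair hyv] at h2
        exact h2
      · rw [nbr_sup_ne G d hdu hdv]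
        exact hGcount d hd hdu
  · right
    push_neg at hcase
    obtain ⟨huT, hInter⟩ := hcase
    refine ⟨D \ T, ⟨hdom, ?_⟩, ?_⟩
    · intro d hd
      obtain ⟨hdD, hdT⟩ := mem_sdiff.1 hd
      by_cases hdu : d = u
      · subst hdu
        left
        rw [hcards d]
        have h1 : G.neighborFinset d \ D = ∅ := sdiff_eq_empty_iff_subset.2 hu0
        have h2 : G.neighborFinset d ∩ T = ∅ := hInter
        rw [h1, h2]
        simp
      · exact hGcount d hd hdu
    · obtain ⟨t, ht⟩ := hTne
      have h1 : (D \ T).card = D.card - T.card := card_sdiff_of_subset hTD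
      have h2 : 1 ≤ T.card := card_pos.2 ⟨t, ht⟩
      have h3 : T.card ≤ D.card := card_le_card hTD
      omega

end Core

section Top

variable (G : SimpleGraph V) [DecidableRel G.Adj]

lemma nbr_sup_v {u v : V} (huv : u ≠ v) (hnadj : ¬ G.Adj u v) :
    (G ⊔ SimpleGraph.edge u v).neighborFinset v = insert u (G.neighborFinset v) := by
  ext y
  simp only [SimpleGraph.mem_neighborFinset, SimpleGraph.sup_adj, SimpleGraph.edge_adj,
    mem_insert]
  constructor
  · rintro (h | ⟨hor, hne⟩)
    · exact Or.inr h
    · rcases hor with ⟨rfl, -⟩ | ⟨-, rfl⟩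
      · exact absurd rfl huv
      · exact Or.inl rfl
  · rintro (rfl | h)
    · exact Or.inr ⟨Or.inr ⟨trivial, rfl⟩, fun h => huv h.symm⟩
    · exact Or.inl h

lemma iscds_of_eq {G₁ G₂ : SimpleGraph V} [DecidableRel G₁.Adj] [DecidableRel G₂.Adj]
    (h : G₁ = G₂) {D : Finset V} (hD : IsCertDomSet G₁ D) : IsCertDomSet G₂ D := by
  have hnf : ∀ x, G₂.neighborFinset x = G₁.neighborFinset x := by
    intro x
    ext y
    simp only [SimpleGraph.mem_neighborFinset]
    rw [h]
  constructor
  · intro x hx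
    obtain ⟨d, hd, hadj⟩ := hD.1 x hx
    exact ⟨d, hd, h ▸ hadj⟩
  · intro x hx
    rw [hnf]
    exact hD.2 x hx

lemma step (hconn : G.Connected) (hcard : 2 ≤ Fintype.card V) (u v : V)
    (huv : u ≠ v) (hnadj : ¬ G.Adj u v) :
    ∀ (n : ℕ) (D : Finset V), IsCertDomSet G D → D.card ≤ n →
      ∃ D', IsCertDomSet (G ⊔ SimpleGraph.edge u v) D' ∧ D'.card ≤ D.card := by
  intro n
  induction n with
  | zero =>
      intro D hD hc
      exfalso
      have hDe : D = ∅ := card_eq_zero.1 (le_antisymm hc (Nat.zero_le _))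
      have hx : u ∉ D := by simp [hDe]
      obtain ⟨d, hd, -⟩ := hD.1 u hx
      simp [hDe] at hd
  | succ n ih =>
      intro D hD hc
      by_cases hdir : IsCertDomSet (G ⊔ SimpleGraph.edge u v) D
      · exact ⟨D, hdir, le_rfl⟩
      have hpat : (u ∈ D ∧ v ∉ D ∧ G.neighborFinset u ⊆ D) ∨
          (v ∈ D ∧ u ∉ D ∧ G.neighborFinset v ⊆ D) := by
        by_contra hcon
        push_neg at hcon
        apply hdir
        constructor
        · intro x hx
          obtain ⟨d, hdD, hadj⟩ := hD.1 x hx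
          exact ⟨d, hdD, (SimpleGraph.sup_adj _ _ _ _).2 (Or.inl hadj)⟩
        · intro d hdD
          by_cases hdu : d = u
          · subst hdu
            by_cases hvD : v ∈ D
            · rw [nbr_sup_u G huv hnadj]
              have heq : insert v (G.neighborFinset d) \ D = G.neighborFinset d \ D := by
                ext y
                simp only [mem_sdiff, mem_insert]
                constructor
                · rintro ⟨rfl | hy, hyD⟩
                  · exact absurd hvD hyD
                  · exact ⟨hy, hyD⟩
                · rintro ⟨hy, hyD⟩
                  exact ⟨Or.inr hy, hyD⟩
              rw [heq]
              exact hD.2 d hdD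
            · have hns : ¬ G.neighborFinset d ⊆ D := hcon.1 hdD hvD
              rw [nbr_sup_u G huv hnadj]
              have heq : insert v (G.neighborFinset d) \ D
                  = insert v (G.neighborFinset d \ D) := by
                ext y
                simp only [mem_sdiff, mem_insert]
                constructor
                · rintro ⟨rfl | hy, hyD⟩
                  · exact Or.inl rfl
                  · exact Or.inr ⟨hy, hyD⟩
                · rintro (rfl | ⟨hy, hyD⟩)
                  · exact ⟨Or.inl rfl, hvD⟩
                  · exact ⟨Or.inr hy, hyD⟩
              have hvn : v ∉ G.neighborFinset d \ D := by
                simp only [mem_sdiff, SimpleGraph.mem_neighborFinset]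
                rintro ⟨h1, -⟩
                exact hnadj h1
              rw [heq, card_insert_of_notMem hvn]
              rcases hD.2 d hdD with h4 | h4
              · exact absurd (sdiff_eq_empty_iff_subset.1 (card_eq_zero.1 h4)) hns
              · right; omega
          · by_cases hdv : d = v
            · subst hdv
              by_cases huD : u ∈ D
              · rw [nbr_sup_v G huv hnadj]
                have heq : insert u (G.neighborFinset d) \ D = G.neighborFinset d \ D := by
                  ext y
                  simp only [mem_sdiff, mem_insert]
                  constructor
                  · rintro ⟨rfl | hy, hyD⟩
                    · exact absurd huD hyD
                    · exact ⟨hy, hyD⟩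
                  · rintro ⟨hy, hyD⟩
                    exact ⟨Or.inr hy, hyD⟩
                rw [heq]
                exact hD.2 d hdD
              · have hns : ¬ G.neighborFinset d ⊆ D := hcon.2 hdD huD
                rw [nbr_sup_v G huv hnadj]
                have heq : insert u (G.neighborFinset d) \ D
                    = insert u (G.neighborFinset d \ D) := by
                  ext y
                  simp only [mem_sdiff, mem_insert]
                  constructor
                  · rintro ⟨rfl | hy, hyD⟩
                    · exact Or.inl rfl
                    · exact Or.inr ⟨hy, hyD⟩
                  · rintro (rfl | ⟨hy, hyD⟩)
                    · exact ⟨Or.inl rfl, huD⟩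
                    · exact ⟨Or.inr hy, hyD⟩
                have hun : u ∉ G.neighborFinset d \ D := by
                  simp only [mem_sdiff, SimpleGraph.mem_neighborFinset]
                  rintro ⟨h1, -⟩
                  exact hnadj h1.symm
                rw [heq, card_insert_of_notMem hun]
                rcases hD.2 d hdD with h4 | h4
                · exact absurd (sdiff_eq_empty_iff_subset.1 (card_eq_zero.1 h4)) hns
                · right; omega
            · rw [nbr_sup_ne G d hdu hdv]
              exact hD.2 d hdD
      rcases hpat with ⟨h1, h2, h3⟩ | ⟨h1, h2, h3⟩
      · rcases core G hconn hcard u v huv hnadj D hD h1 h2 h3 with ⟨D', hD', hle⟩ | ⟨D'', hD'', hlt⟩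
        · exact ⟨D', hD', hle⟩
        · obtain ⟨D3, hD3, hle3⟩ := ih D'' hD'' (by omega)
          exact ⟨D3, hD3, le_trans hle3 (by omega)⟩
      · have hcomm : (G ⊔ SimpleGraph.edge u v) = (G ⊔ SimpleGraph.edge v u) := by
          rw [edge_comm']
        rcases core G hconn hcard v u huv.symm (fun h => hnadj h.symm) D hD h1 h2 h3 with
          ⟨D', hD', hle⟩ | ⟨D'', hD'', hlt⟩
        · exact ⟨D', iscds_of_eq hcomm.symm hD', hle⟩
        · obtain ⟨D3, hD3, hle3⟩ := ih D'' hD'' (by omega)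
          exact ⟨D3, hD3, le_trans hle3 (by omega)⟩

end Top

theorem gammaCer_addEdge_le (G : SimpleGraph V) [DecidableRel G.Adj]
    (hconn : G.Connected) (hcard : 2 ≤ Fintype.card V)
    (u v : V) (huv : u ≠ v) (hnadj : ¬ G.Adj u v) :
    gammaCer (G ⊔ SimpleGraph.edge u v) ≤ gammaCer G := by
  classical
  have huniv : IsCertDomSet G Finset.univ := by
    constructor
    · intro x hx
      exact absurd (mem_univ x) hx
    · intro x _
      left
      simp
  have hne : {n | ∃ D : Finset V, IsCertDomSet G D ∧ D.card = n}.Nonempty :=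
    ⟨(Finset.univ : Finset V).card, Finset.univ, huniv, rfl⟩
  obtain ⟨D, hD, hDcard⟩ := Nat.sInf_mem hne
  obtain ⟨D', hD', hle⟩ := step G hconn hcard u v huv hnadj D.card D hD le_rfl
  have h1 : gammaCer (G ⊔ SimpleGraph.edge u v) ≤ D'.card :=
    Nat.sInf_le ⟨D', hD', rfl⟩
  have h2 : gammaCer G = D.card := hDcard.symm
  omega
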